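/- For every positive integer ν ≥ 31 and every t ∈ (0,1], |Q_ν(t²)|/((2ν+1)²t) ≤ u₁(ν)·(2ν+1)·t + u₂(ν) where u₁(ν) = (176ν³+1860ν²+100ν)/(375(2ν+1)³) and u₂(ν) = (18ν²+30ν)/(25(2ν+1)²), provided (2ν+1)t ≤ (2ν+1)/√2; here Q_ν(0)=0 is determined by T_{2ν+1}(t) = (−1)^ν(2ν+1)t + t·Q_ν(t²). -/

import Mathlib

open Real

private lemma nonneg_of_deriv' (f f' : ℝ → ℝ) (hder : ∀ x : ℝ, HasDerivAt f (f' x) x)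
    (h0 : f 0 = 0) (hpos : ∀ x : ℝ, 0 ≤ x → 0 ≤ f' x) {y : ℝ} (hy : 0 ≤ y) : 0 ≤ f y := by
  have hmono : MonotoneOn f (Set.Ici 0) := by
    apply monotoneOn_of_deriv_nonneg (convex_Ici 0)
    · exact fun x _ => ((hder x).differentiableAt).continuousAt.continuousWithinAt
    · exact fun x _ => ((hder x).differentiableAt).differentiableWithinAt
    · intro x hx
      rw [interior_Ici] at hx
      rw [(hder x).deriv]
      exact hpos x hx.le
  have := hmono (Set.self_mem_Ici) (Set.mem_Ici.2 hy) hy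
  simpa [h0] using this

private lemma sin_ge_cubic' {y : ℝ} (hy : 0 ≤ y) : y - y ^ 3 / 6 ≤ Real.sin y := by
  have h := nonneg_of_deriv' (fun z => Real.sin z - (z - z ^ 3 / 6))
    (fun z => Real.cos z - (1 - z ^ 2 / 2)) ?_ (by norm_num) ?_ hy
  · simpa using h
  · intro x
    have h1 : HasDerivAt (fun z : ℝ => z - z ^ 3 / 6) (1 - x ^ 2 / 2) x := by
      have := (hasDerivAt_id x).sub ((hasDerivAt_pow 3 x).div_const 6)
      refine this.congr_deriv ?_
      push_cast; ring
    exact (Real.hasDerivAt_sin x).sub h1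
  · intro x _
    have := Real.one_sub_sq_div_two_le_cos (x := x)
    linarith

private lemma cos_le_quartic' {y : ℝ} (hy : 0 ≤ y) : Real.cos y ≤ 1 - y ^ 2 / 2 + y ^ 4 / 24 := by
  have h := nonneg_of_deriv' (fun z => (1 - z ^ 2 / 2 + z ^ 4 / 24) - Real.cos z)
    (fun z => (-z + z ^ 3 / 6) + Real.sin z) ?_ (by norm_num) ?_ hy
  · simpa using h
  · intro x
    have h1 : HasDerivAt (fun z : ℝ => 1 - z ^ 2 / 2 + z ^ 4 / 24) (-x + x ^ 3 / 6) x := by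
      have := (((hasDerivAt_const x (1:ℝ)).sub ((hasDerivAt_pow 2 x).div_const 2)).add
        ((hasDerivAt_pow 4 x).div_const 24))
      refine this.congr_deriv ?_
      push_cast; ring
    have := h1.sub (Real.hasDerivAt_cos x)
    refine this.congr_deriv ?_
    ring
  · intro x hx
    have := sin_ge_cubic' hx
    linarith

private lemma sin_le_quintic' {y : ℝ} (hy : 0 ≤ y) :
    Real.sin y ≤ y - y ^ 3 / 6 + y ^ 5 / 120 := by
  have h := nonneg_of_deriv' (fun z => (z - z ^ 3 / 6 + z ^ 5 / 120) - Real.sin z)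
    (fun z => (1 - z ^ 2 / 2 + z ^ 4 / 24) - Real.cos z) ?_ (by norm_num) ?_ hy
  · simpa using h
  · intro x
    have h1 : HasDerivAt (fun z : ℝ => z - z ^ 3 / 6 + z ^ 5 / 120)
        (1 - x ^ 2 / 2 + x ^ 4 / 24) x := by
      have := ((hasDerivAt_id x).sub ((hasDerivAt_pow 3 x).div_const 6)).add
        ((hasDerivAt_pow 5 x).div_const 120)
      refine this.congr_deriv ?_
      push_cast; ring
    exact h1.sub (Real.hasDerivAt_sin x)
  · intro x hx
    have := cos_le_quartic' hx
    linarith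

private lemma cos_ge_sextic' {y : ℝ} (hy : 0 ≤ y) :
    1 - y ^ 2 / 2 + y ^ 4 / 24 - y ^ 6 / 720 ≤ Real.cos y := by
  have h := nonneg_of_deriv' (fun z => Real.cos z - (1 - z ^ 2 / 2 + z ^ 4 / 24 - z ^ 6 / 720))
    (fun z => (z - z ^ 3 / 6 + z ^ 5 / 120) - Real.sin z) ?_ (by norm_num) ?_ hy
  · simpa using h
  · intro x
    have h1 : HasDerivAt (fun z : ℝ => 1 - z ^ 2 / 2 + z ^ 4 / 24 - z ^ 6 / 720)
        (-x + x ^ 3 / 6 - x ^ 5 / 120) x := by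
      have := (((hasDerivAt_const x (1:ℝ)).sub ((hasDerivAt_pow 2 x).div_const 2)).add
        ((hasDerivAt_pow 4 x).div_const 24)).sub ((hasDerivAt_pow 6 x).div_const 720)
      refine this.congr_deriv ?_
      push_cast; ring
    have := (Real.hasDerivAt_cos x).sub h1
    refine this.congr_deriv ?_
    ring
  · intro x hx
    have := sin_le_quintic' hx
    linarith

private lemma sin_ge_septic' {y : ℝ} (hy : 0 ≤ y) :
    y - y ^ 3 / 6 + y ^ 5 / 120 - y ^ 7 / 5040 ≤ Real.sin y := by
  have h := nonneg_of_deriv'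
    (fun z => Real.sin z - (z - z ^ 3 / 6 + z ^ 5 / 120 - z ^ 7 / 5040))
    (fun z => Real.cos z - (1 - z ^ 2 / 2 + z ^ 4 / 24 - z ^ 6 / 720)) ?_ (by norm_num) ?_ hy
  · simpa using h
  · intro x
    have h1 : HasDerivAt (fun z : ℝ => z - z ^ 3 / 6 + z ^ 5 / 120 - z ^ 7 / 5040)
        (1 - x ^ 2 / 2 + x ^ 4 / 24 - x ^ 6 / 720) x := by
      have := (((hasDerivAt_id x).sub ((hasDerivAt_pow 3 x).div_const 6)).add
        ((hasDerivAt_pow 5 x).div_const 120)).sub ((hasDerivAt_pow 7 x).div_const 5040)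
      refine this.congr_deriv ?_
      push_cast; ring
    exact (Real.hasDerivAt_sin x).sub h1
  · intro x hx
    have := cos_ge_sextic' hx
    linarith

private lemma crude_bound' {x : ℝ} (hx : 4 ≤ x) :
    1 + x ≤ x ^ 2 * ((22 / 375) * x + 9 / 50) := by
  nlinarith [hx, sq_nonneg x, sq_nonneg (x - 4)]

private lemma Pnn' {y : ℝ} (hy : 0 ≤ y) : 0 ≤ y ^ 3 / 6 - y ^ 5 / 120 + y ^ 7 / 5040 := by
  nlinarith [sq_nonneg (y ^ 2 - 21), pow_nonneg hy 3]

private lemma small_poly' {x y c : ℝ} (hx0 : 0 ≤ x) (hx4 : x ≤ 4) (hxy : x ≤ y)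
    (hyx : y ≤ (384 / 383) * x) (hc0 : 0 ≤ c) (hc : c ≤ (384 / 383) ^ 3 * x ^ 3 / 23814) :
    y ^ 3 / 6 - y ^ 5 / 120 + y ^ 7 / 5040 + c ≤ x ^ 2 * ((22 / 375) * x + 9 / 50) := by
  have hy0 : 0 ≤ y := hx0.trans hxy
  have h3 : y ^ 3 ≤ ((384 / 383) * x) ^ 3 := pow_le_pow_left₀ hy0 hyx 3
  have h5 : x ^ 5 ≤ y ^ 5 := pow_le_pow_left₀ hx0 hxy 5
  have h7 : y ^ 7 ≤ ((384 / 383) * x) ^ 7 := pow_le_pow_left₀ hy0 hyx 7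
  have key : (384/383:ℝ)^3 * (1/6 + 1/23814) * x^3 - x^5/120 + (384/383)^7 * x^7/5040
      ≤ x^2*((22/375)*x + 9/50) := by
    nlinarith [mul_nonneg hx0 (sub_nonneg.2 hx4), sq_nonneg (x - 12/5), sq_nonneg (x^2 - 29/5),
      mul_nonneg (mul_nonneg hx0 hx0) hx0, sq_nonneg x,
      mul_nonneg (mul_nonneg hx0 (sub_nonneg.2 hx4)) (sq_nonneg (x - 12/5)),
      mul_nonneg (mul_nonneg (mul_nonneg hx0 hx0) hx0) (sq_nonneg (x - 12/5)),
      mul_nonneg (mul_nonneg hx0 (sub_nonneg.2 hx4)) (sq_nonneg (x^2 - 29/5)),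
      mul_nonneg (mul_nonneg hx0 (sub_nonneg.2 hx4)) (sq_nonneg x)]
  have e3 : ((384 / 383) * x) ^ 3 = (384/383:ℝ)^3 * x^3 := by ring
  have e7 : ((384 / 383) * x) ^ 7 = (384/383:ℝ)^7 * x^7 := by ring
  rw [e3] at h3; rw [e7] at h7
  linarith

set_option maxHeartbeats 1000000 in
theorem stmt19 (ν : ℕ) (hν : 31 ≤ ν) (Q : Polynomial ℝ) (hQ0 : Q.eval 0 = 0)
    (hQ : ∀ s : ℝ, (Polynomial.Chebyshev.T ℝ (2 * ν + 1)).eval s =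
      (-1 : ℝ) ^ ν * (2 * ν + 1) * s + s * Q.eval (s ^ 2))
    (t : ℝ) (ht0 : 0 < t) (ht1 : t ≤ 1)
    (ht2 : (2 * (ν : ℝ) + 1) * t ≤ (2 * (ν : ℝ) + 1) / Real.sqrt 2) :
    |Q.eval (t ^ 2)| / ((2 * (ν : ℝ) + 1) ^ 2 * t) ≤
      ((176 * (ν : ℝ) ^ 3 + 1860 * ν ^ 2 + 100 * ν) / (375 * (2 * ν + 1) ^ 3)) * (2 * ν + 1) * t +
        (18 * (ν : ℝ) ^ 2 + 30 * ν) / (25 * (2 * ν + 1) ^ 2) := by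
  clear ht2 hQ0
  have hν' : (31 : ℝ) ≤ (ν : ℝ) := by exact_mod_cast hν
  set N : ℝ := 2 * (ν : ℝ) + 1 with hNdef
  have hN63 : (63 : ℝ) ≤ N := by rw [hNdef]; linarith
  have hNpos : (0 : ℝ) < N := by linarith
  set a : ℝ := Real.arcsin t with hadef
  have hsa : Real.sin a = t := Real.sin_arcsin (by linarith) ht1
  have ha0 : 0 ≤ a := Real.arcsin_nonneg.2 ht0.le
  have hta : t ≤ a := by
    calc t = Real.sin a := hsa.symm
    _ ≤ |Real.sin a| := le_abs_self _
    _ ≤ |a| := Real.abs_sin_le_abs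
    _ = a := abs_of_nonneg ha0
  -- Chebyshev evaluation
  have hT : (Polynomial.Chebyshev.T ℝ (2 * ν + 1)).eval t = (-1 : ℝ) ^ ν * Real.sin (N * a) := by
    have h1 : t = Real.cos (π / 2 - a) := by rw [Real.cos_pi_div_two_sub, hsa]
    calc (Polynomial.Chebyshev.T ℝ (2 * ν + 1)).eval t
        = (Polynomial.Chebyshev.T ℝ (2 * ν + 1)).eval (Real.cos (π / 2 - a)) := by rw [← h1]
    _ = Real.cos (((2 * ν + 1 : ℤ) : ℝ) * (π / 2 - a)) := Polynomial.Chebyshev.T_real_cos _ _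
    _ = Real.cos ((ν : ℝ) * π - (N * a - π / 2)) := by rw [hNdef]; push_cast; ring_nf
    _ = (-1 : ℝ) ^ ν * Real.cos (N * a - π / 2) := Real.cos_nat_mul_pi_sub _ ν
    _ = (-1 : ℝ) ^ ν * Real.sin (N * a) := by rw [Real.cos_sub_pi_div_two]
  have hQt : t * Q.eval (t ^ 2) = (-1 : ℝ) ^ ν * (Real.sin (N * a) - N * t) := by
    have h2 := hQ t
    rw [hT] at h2
    linear_combination -h2
  have habs : |Q.eval (t ^ 2)| * t = |Real.sin (N * a) - N * t| := by
    have h3 := congrArg abs hQt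
    rw [abs_mul, abs_mul, abs_pow, abs_neg, abs_one, one_pow, one_mul,
      abs_of_pos ht0] at h3
    linarith [h3]
  set S : ℝ := Real.sin (N * a) - N * t with hSdef
  set x : ℝ := N * t with hxdef
  have hx0 : 0 < x := mul_pos hNpos ht0
  -- constants comparison
  have hu1 : (22 / 375 : ℝ) ≤
      (176 * (ν : ℝ) ^ 3 + 1860 * ν ^ 2 + 100 * ν) / (375 * N ^ 3) := by
    rw [div_le_div_iff₀ (by norm_num) (by positivity)]
    rw [hNdef]; nlinarith [hν']
  have hu2 : (9 / 50 : ℝ) ≤ (18 * (ν : ℝ) ^ 2 + 30 * ν) / (25 * N ^ 2) := by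
    rw [div_le_div_iff₀ (by norm_num) (by positivity)]
    rw [hNdef]; nlinarith [hν']
  -- main bound on |S|
  have hmain : |S| ≤ x ^ 2 * ((22 / 375) * x + 9 / 50) := by
    rcases le_or_gt 4 x with hbig | hsmall
    · have hlb : -(1 + x) ≤ S := by
        have := Real.neg_one_le_sin (N * a); rw [hSdef]; linarith
      have hub : S ≤ 1 + x := by
        have := Real.sin_le_one (N * a); rw [hSdef]; linarith
      exact (abs_le.2 ⟨hlb, hub⟩).trans (crude_bound' hbig)
    · -- small x
      have ht463 : t ≤ 4 / 63 := by
        have h63 : 63 * t ≤ N * t := mul_le_mul_of_nonneg_right hN63 ht0.le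
        rw [← hxdef] at h63; linarith
      have hc := sin_ge_cubic' ha0
      rw [hsa] at hc
      have ha18 : a ≤ 1 / 8 := by
        by_contra h
        push_neg at h
        have ha2 : a ≤ 2 := by
          have := Real.arcsin_le_pi_div_two t
          rw [← hadef] at this
          nlinarith [Real.pi_le_four]
        have hcert : 0 ≤ (a - 1/8) * (2 - a) * (a + 17/8) := by
          apply mul_nonneg (mul_nonneg (by linarith) (by linarith)) (by linarith)
        nlinarith [hcert, hc, ht463, h]
      have hat : a ≤ (384 / 383) * t := by
        have hcert : 0 ≤ a * (1/8 - a) * (1/8 + a) := by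
          apply mul_nonneg (mul_nonneg ha0 (by linarith)) (by linarith)
        nlinarith [hcert, hc]
      set y : ℝ := N * a with hydef
      have hy0 : 0 ≤ y := mul_nonneg hNpos.le ha0
      have hxy : x ≤ y := by
        rw [hxdef, hydef]; exact mul_le_mul_of_nonneg_left hta hNpos.le
      have hyx : y ≤ (384 / 383) * x := by
        have := mul_le_mul_of_nonneg_left hat hNpos.le
        rw [hxdef, hydef]; linarith
      have hsiny : Real.sin y ≤ y := by
        calc Real.sin y ≤ |Real.sin y| := le_abs_self _
        _ ≤ |y| := Real.abs_sin_le_abs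
        _ = y := abs_of_nonneg hy0
      have hub : S ≤ N * a ^ 3 / 6 := by
        have h4 : N * (a - t) ≤ N * (a ^ 3 / 6) := by
          apply mul_le_mul_of_nonneg_left (by linarith) hNpos.le
        rw [hSdef, hydef] at *
        nlinarith [hsiny, h4]
      have hlb : -(y ^ 3 / 6 - y ^ 5 / 120 + y ^ 7 / 5040) ≤ S := by
        have h1 := sin_ge_septic' hy0
        rw [hSdef]
        have h5 : N * t ≤ N * a := mul_le_mul_of_nonneg_left hta hNpos.le
        rw [← hydef] at h5
        linarith
      have hcube : N * a ^ 3 / 6 ≤ (384 / 383) ^ 3 * x ^ 3 / 23814 := by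
        have ha63 : a ≤ (384 / 383) * (x / 63) := by
          have h63 : 63 * t ≤ x := by
            rw [hxdef]; exact mul_le_mul_of_nonneg_right hN63 ht0.le
          linarith
        have h2 : a ^ 2 ≤ ((384 / 383) * (x / 63)) ^ 2 := by
          apply pow_le_pow_left₀ ha0 ha63
        have h6 : (N * a) * a ^ 2 ≤ ((384 / 383) * x) * ((384 / 383) * (x / 63)) ^ 2 := by
          apply mul_le_mul hyx h2 (sq_nonneg a) (by positivity)
        calc N * a ^ 3 / 6 = (N * a) * a ^ 2 / 6 := by ring
        _ ≤ ((384 / 383) * x) * ((384 / 383) * (x / 63)) ^ 2 / 6 := by linarith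
        _ = (384 / 383) ^ 3 * x ^ 3 / 23814 := by ring
      have habs' : |S| ≤ y ^ 3 / 6 - y ^ 5 / 120 + y ^ 7 / 5040 + N * a ^ 3 / 6 := by
        apply abs_le.2
        constructor
        · have hnn : 0 ≤ N * a ^ 3 / 6 := by positivity
          linarith
        · linarith [hub, Pnn' hy0]
      have hfin := small_poly' hx0.le hsmall.le hxy hyx (by positivity : (0:ℝ) ≤ N * a ^ 3 / 6)
        hcube
      linarith
  -- conclude
  rw [div_le_iff₀ (by positivity)]
  have hRge : ((22 / 375 : ℝ) * x + 9 / 50) ≤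
      (176 * (ν : ℝ) ^ 3 + 1860 * ν ^ 2 + 100 * ν) / (375 * N ^ 3) * N * t
        + (18 * (ν : ℝ) ^ 2 + 30 * ν) / (25 * N ^ 2) := by
    have h1 := mul_le_mul_of_nonneg_right hu1 hx0.le
    have e1 : (176 * (ν : ℝ) ^ 3 + 1860 * ν ^ 2 + 100 * ν) / (375 * N ^ 3) * x
        = (176 * (ν : ℝ) ^ 3 + 1860 * ν ^ 2 + 100 * ν) / (375 * N ^ 3) * N * t := by
      rw [hxdef]; ring
    rw [e1] at h1
    linarith
  have hQle : |Q.eval (t ^ 2)| * t ≤ x ^ 2 * ((22 / 375) * x + 9 / 50) := by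
    rw [habs]; exact hmain
  have h2 : x ^ 2 * ((22 / 375) * x + 9 / 50) ≤ x ^ 2 *
      ((176 * (ν : ℝ) ^ 3 + 1860 * ν ^ 2 + 100 * ν) / (375 * N ^ 3) * N * t
        + (18 * (ν : ℝ) ^ 2 + 30 * ν) / (25 * N ^ 2)) :=
    mul_le_mul_of_nonneg_left hRge (sq_nonneg x)
  have h3 : |Q.eval (t ^ 2)| * t ≤
      (((176 * (ν : ℝ) ^ 3 + 1860 * ν ^ 2 + 100 * ν) / (375 * N ^ 3)) * N * t
        + (18 * (ν : ℝ) ^ 2 + 30 * ν) / (25 * N ^ 2)) * (N ^ 2 * t) * t := by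
    have e2 : x ^ 2 *
        ((176 * (ν : ℝ) ^ 3 + 1860 * ν ^ 2 + 100 * ν) / (375 * N ^ 3) * N * t
          + (18 * (ν : ℝ) ^ 2 + 30 * ν) / (25 * N ^ 2))
        = (((176 * (ν : ℝ) ^ 3 + 1860 * ν ^ 2 + 100 * ν) / (375 * N ^ 3)) * N * t
          + (18 * (ν : ℝ) ^ 2 + 30 * ν) / (25 * N ^ 2)) * (N ^ 2 * t) * t := by
      rw [hxdef]; ring
    linarith [hQle, h2, e2.le, e2.ge]
  exact le_of_mul_le_mul_right h3 ht0
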